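/- arXiv:1212.1521 — 5 statements merged into one kernel-verified Lean document; each statement's English description precedes it below -/
import Mathlib

section
/- Let X_1,…,X_k be n×n matrices over the max-plus semiring having a common associated acyclic graph, let p be the length of the longest path in that graph, and suppose ‖X_i‖ ≥ 0 for all i = 1,…,k. Then for any nonnegative integers m_1,…,m_k, ‖(E ⊕ X_1)^{⊗m_1} ⊗ ⋯ ⊗ (E ⊕ X_k)^{⊗m_k}‖ ≤ (‖X_1‖ ⊕ ⋯ ⊕ ‖X_k‖)^{⊗p} = p · max_{1≤i≤k} ‖X_i‖. -/
/-- The max-plus carrier set `ℝ ∪ {ε}` with `ε = -∞`, realized as `WithBot ℝ`.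
The max-plus addition `⊕` is `⊔` (max, with `ε` as null element) and the
max-plus multiplication `⊗` is `+` (with `x + ⊥ = ⊥ + x = ⊥`). -/
abbrev MP : Type := WithBot ℝ

/-- Max-plus matrix product: `(X ⊗ Y) i j = max_k (X i k + Y k j)`. -/
noncomputable def mpMul {n : ℕ} (X Y : Matrix (Fin n) (Fin n) MP) : Matrix (Fin n) (Fin n) MP :=
  Matrix.of fun i j => Finset.univ.sup fun k => X i k + Y k j

/-- Max-plus matrix sum: entrywise maximum. -/
noncomputable def mpAdd {n : ℕ} (X Y : Matrix (Fin n) (Fin n) MP) : Matrix (Fin n) (Fin n) MP :=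
  Matrix.of fun i j => X i j ⊔ Y i j

/-- The max-plus identity matrix `E`: `0` on the diagonal, `ε` off the diagonal. -/
noncomputable def mpOne (n : ℕ) : Matrix (Fin n) (Fin n) MP :=
  Matrix.of fun i j => if i = j then (0 : MP) else ⊥

/-- Max-plus matrix power: `X^{⊗0} = E`, `X^{⊗(q+1)} = X ⊗ X^{⊗q}`. -/
noncomputable def mpPow {n : ℕ} (X : Matrix (Fin n) (Fin n) MP) : ℕ → Matrix (Fin n) (Fin n) MP
  | 0 => mpOne n
  | q + 1 => mpMul X (mpPow X q)

/-- Max-plus matrix norm: `‖X‖ = max_{i,j} X i j`. -/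
noncomputable def mpNorm {n : ℕ} (X : Matrix (Fin n) (Fin n) MP) : MP :=
  Finset.univ.sup fun i => Finset.univ.sup fun j => X i j

/-- A path of exactly `q` edges from `i` to `j` in the directed graph with
adjacency relation `Adj`. -/
def AdjPath {n : ℕ} (Adj : Fin n → Fin n → Prop) (q : ℕ) (i j : Fin n) : Prop :=
  ∃ f : ℕ → Fin n, f 0 = i ∧ f q = j ∧ ∀ t < q, Adj (f t) (f (t + 1))

/-- A path of exactly `q` edges from `i` to `j` in the graph associated with the
matrix `X` (an edge `(i,j)` exists precisely when `X i j ≠ ε`). -/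
def mpPath {n : ℕ} (X : Matrix (Fin n) (Fin n) MP) (q : ℕ) (i j : Fin n) : Prop :=
  AdjPath (fun a b => X a b ≠ ⊥) q i j

/-- The graph associated with `X` is acyclic: no directed cycle. -/
def mpAcyclic {n : ℕ} (X : Matrix (Fin n) (Fin n) MP) : Prop :=
  ∀ i q, 1 ≤ q → ¬ mpPath X q i i

/-- The diagonal matrix `diag (d 1, …, d n)` over the max-plus semiring. -/
noncomputable def diagM {n : ℕ} (d : Fin n → ℝ) : Matrix (Fin n) (Fin n) MP :=
  Matrix.of fun i j => if i = j then ((d i : ℝ) : MP) else ⊥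

/-- Iterated max-plus product of a list of matrices (empty product is `E`). -/
noncomputable def mpProd {n : ℕ} : List (Matrix (Fin n) (Fin n) MP) → Matrix (Fin n) (Fin n) MP
  | [] => mpOne n
  | X :: L => mpMul X (mpProd L)

section Aux

variable {n : ℕ} {Adj : Fin n → Fin n → Prop} {c : MP}

lemma adjPath_refl (Adj : Fin n → Fin n → Prop) (i : Fin n) : AdjPath Adj 0 i i :=
  ⟨fun _ => i, rfl, rfl, fun t ht => absurd ht (Nat.not_lt_zero t)⟩

lemma adjPath_trans {q1 q2 : ℕ} {i l j : Fin n} (h1 : AdjPath Adj q1 i l)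
    (h2 : AdjPath Adj q2 l j) : AdjPath Adj (q1 + q2) i j := by
  obtain ⟨f, hf0, hfq, hf⟩ := h1
  obtain ⟨g, hg0, hgq, hg⟩ := h2
  refine ⟨fun t => if t < q1 then f t else g (t - q1), ?_, ?_, ?_⟩
  · by_cases h : 0 < q1
    · simp [h, hf0]
    · have : q1 = 0 := by omega
      subst this
      simpa [hg0] using hfq.symm.trans hf0
  · have : ¬ q1 + q2 < q1 := by omega
    simp [this, hgq]
  · intro t ht
    show Adj (if t < q1 then f t else g (t - q1))
      (if t + 1 < q1 then f (t + 1) else g (t + 1 - q1))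
    by_cases h1' : t + 1 < q1
    · have h0 : t < q1 := by omega
      simpa [h0, h1'] using hf t (by omega)
    · by_cases h0 : t < q1
      · have ht1 : t + 1 = q1 := by omega
        have : f t = f t := rfl
        have key : g (t + 1 - q1) = f q1 := by
          rw [ht1]; simp [hg0, hfq]
        rw [if_pos h0, if_neg (by omega : ¬ t + 1 < q1), key, ← ht1]
        exact hf t (by omega)
      · simp only [if_neg h0, if_neg (by omega : ¬ t + 1 < q1)]
        have : t + 1 - q1 = (t - q1) + 1 := by omega
        rw [this]
        exact hg (t - q1) (by omega)

/-- An entry value `x` (for positions `i j`) is "good" if it is `ε` or bounded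
by `q • c` for some path length `q` realizing a path from `i` to `j`. -/
def GoodEntry (Adj : Fin n → Fin n → Prop) (c : MP) (i j : Fin n) (x : MP) : Prop :=
  x = ⊥ ∨ ∃ q, AdjPath Adj q i j ∧ x ≤ q • c

def GoodMat (Adj : Fin n → Fin n → Prop) (c : MP) (M : Matrix (Fin n) (Fin n) MP) : Prop :=
  ∀ i j, GoodEntry Adj c i j (M i j)

lemma goodEntry_sup (hc : (0 : MP) ≤ c) {i j : Fin n} {x y : MP}
    (hx : GoodEntry Adj c i j x) (hy : GoodEntry Adj c i j y) :
    GoodEntry Adj c i j (x ⊔ y) := by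
  rcases hx with rfl | ⟨q1, hp1, hb1⟩
  · simpa using hy
  rcases hy with rfl | ⟨q2, hp2, hb2⟩
  · exact Or.inr ⟨q1, hp1, by simpa using hb1⟩
  refine Or.inr ⟨max q1 q2, ?_, ?_⟩
  · rcases le_total q1 q2 with h | h
    · simpa [Nat.max_eq_right h] using hp2
    · simpa [Nat.max_eq_left h] using hp1
  · refine sup_le (hb1.trans ?_) (hb2.trans ?_) <;>
      exact nsmul_le_nsmul_left hc (by omega)

lemma goodEntry_finsetSup (hc : (0 : MP) ≤ c) {i j : Fin n} {α : Type*}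
    (s : Finset α) (g : α → MP) (h : ∀ a ∈ s, GoodEntry Adj c i j (g a)) :
    GoodEntry Adj c i j (s.sup g) := by
  classical
  induction s using Finset.cons_induction with
  | empty => exact Or.inl (by simp)
  | cons a s ha ih =>
    rw [Finset.sup_cons]
    exact goodEntry_sup hc (h a (Finset.mem_cons_self a s))
      (ih fun b hb => h b (Finset.mem_cons_of_mem hb))

lemma goodMat_one (hc : (0 : MP) ≤ c) : GoodMat Adj c (mpOne n) := by
  intro i j
  by_cases h : i = j
  · subst h
    exact Or.inr ⟨0, adjPath_refl Adj i, by simp [mpOne]⟩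
  · exact Or.inl (by simp [mpOne, h])

lemma goodMat_mul (hc : (0 : MP) ≤ c) {M N : Matrix (Fin n) (Fin n) MP}
    (hM : GoodMat Adj c M) (hN : GoodMat Adj c N) : GoodMat Adj c (mpMul M N) := by
  intro i j
  show GoodEntry Adj c i j (Finset.univ.sup fun l => M i l + N l j)
  refine goodEntry_finsetSup hc _ _ fun l _ => ?_
  rcases hM i l with h1 | ⟨q1, hp1, hb1⟩
  · exact Or.inl (by simp [h1])
  rcases hN l j with h2 | ⟨q2, hp2, hb2⟩
  · exact Or.inl (by simp [h2])
  refine Or.inr ⟨q1 + q2, adjPath_trans hp1 hp2, ?_⟩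
  rw [add_nsmul]
  exact add_le_add hb1 hb2

lemma goodMat_add (hc : (0 : MP) ≤ c) {M N : Matrix (Fin n) (Fin n) MP}
    (hM : GoodMat Adj c M) (hN : GoodMat Adj c N) : GoodMat Adj c (mpAdd M N) :=
  fun i j => goodEntry_sup hc (hM i j) (hN i j)

lemma goodMat_pow (hc : (0 : MP) ≤ c) {M : Matrix (Fin n) (Fin n) MP}
    (hM : GoodMat Adj c M) (q : ℕ) : GoodMat Adj c (mpPow M q) := by
  induction q with
  | zero => exact goodMat_one hc
  | succ q ih => exact goodMat_mul hc hM ih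

lemma goodMat_prod (hc : (0 : MP) ≤ c) (L : List (Matrix (Fin n) (Fin n) MP))
    (h : ∀ M ∈ L, GoodMat Adj c M) : GoodMat Adj c (mpProd L) := by
  induction L with
  | nil => exact goodMat_one hc
  | cons M L ih =>
    exact goodMat_mul hc (h M List.mem_cons_self)
      (ih fun N hN => h N (List.mem_cons_of_mem M hN))

end Aux

/-- If `X_1,…,X_k` (`k ≥ 1`) have a common associated acyclic
graph with longest path length `p`, and `‖X_i‖ ≥ 0` for all `i`, then for all
nonnegative integers `m_1,…,m_k`,
`‖(E ⊕ X_1)^{⊗m_1} ⊗ ⋯ ⊗ (E ⊕ X_k)^{⊗m_k}‖ ≤ (‖X_1‖ ⊕ ⋯ ⊕ ‖X_k‖)^{⊗p}`,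
where the right-hand side is `p • max_i ‖X_i‖`. -/
theorem stmt7 {n k : ℕ} (hk : 0 < k) (X : Fin k → Matrix (Fin n) (Fin n) MP)
    (Adj : Fin n → Fin n → Prop)
    (hcommon : ∀ a i j, X a i j ≠ ⊥ ↔ Adj i j)
    (hacyc : ∀ i q, 1 ≤ q → ¬ AdjPath Adj q i i)
    (p : ℕ)
    (hub : ∀ q i j, AdjPath Adj q i j → q ≤ p)
    (hex : ∃ i j, AdjPath Adj p i j)
    (hnorm : ∀ i, (0 : MP) ≤ mpNorm (X i))
    (m : Fin k → ℕ) :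
    mpNorm (mpProd (List.ofFn fun i => mpPow (mpAdd (mpOne n) (X i)) (m i)))
      ≤ p • (Finset.univ.sup fun i => mpNorm (X i)) := by
  set c : MP := Finset.univ.sup fun i => mpNorm (X i) with hc_def
  have hc : (0 : MP) ≤ c := by
    exact le_trans (hnorm ⟨0, hk⟩)
      (Finset.le_sup (f := fun i => mpNorm (X i)) (Finset.mem_univ _))
  have hXgood : ∀ a, GoodMat Adj c (X a) := by
    intro a i j
    by_cases h : X a i j = ⊥
    · exact Or.inl h
    · refine Or.inr ⟨1, ?_, ?_⟩
      · refine ⟨fun t => if t = 0 then i else j, by simp, by simp, ?_⟩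
        intro t ht
        have : t = 0 := by omega
        subst this
        simpa using (hcommon a i j).mp h
      · have h1 : X a i j ≤ mpNorm (X a) := by
          refine le_trans ?_ (Finset.le_sup (f := fun i => Finset.univ.sup
            fun j => X a i j) (Finset.mem_univ i))
          exact Finset.le_sup (Finset.mem_univ j)
        simpa [one_nsmul] using h1.trans
          (Finset.le_sup (f := fun i => mpNorm (X i)) (Finset.mem_univ a))
  have hgood : GoodMat Adj c
      (mpProd (List.ofFn fun i => mpPow (mpAdd (mpOne n) (X i)) (m i))) := by
    refine goodMat_prod hc _ fun M hM => ?_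
    rw [List.mem_ofFn] at hM
    obtain ⟨a, rfl⟩ := hM
    exact goodMat_pow hc (goodMat_add hc (goodMat_one hc) (hXgood a)) (m a)
  refine Finset.sup_le fun i _ => Finset.sup_le fun j _ => ?_
  rcases hgood i j with h | ⟨q, hp, hb⟩
  · simp [h]
  · exact hb.trans (nsmul_le_nsmul_left hc (hub q i j hp))
end

section
/- Let ξ_1,…,ξ_k be independent and identically distributed real-valued random variables with finite mean E[ξ_1] and finite variance D[ξ_1]. Then E[max(ξ_1,…,ξ_k)] ≤ E[ξ_1] + ((k-1)/√(2k-1))·√(D[ξ_1]). -/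
open MeasureTheory ProbabilityTheory Set Filter
open scoped Topology

noncomputable def quant (ν : Measure ℝ) (u : ℝ) : ℝ := sInf {x | u ≤ cdf ν x}

variable {ν : Measure ℝ} [IsProbabilityMeasure ν]

lemma quant_set_nonempty {u : ℝ} (hu : u < 1) : {x | u ≤ cdf ν x}.Nonempty := by
  have h := tendsto_cdf_atTop ν
  obtain ⟨x, hx⟩ := (h.eventually (eventually_ge_nhds hu)).exists
  exact ⟨x, hx⟩

omit [IsProbabilityMeasure ν] in
lemma quant_set_bddBelow {u : ℝ} (hu : 0 < u) : BddBelow {x | u ≤ cdf ν x} := by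
  have h := tendsto_cdf_atBot ν
  obtain ⟨y, hy⟩ := (h.eventually (eventually_lt_nhds hu)).exists
  exact ⟨y, fun x hx => le_of_not_gt fun hxy =>
    absurd (le_trans hx ((cdf ν).mono hxy.le)) (not_le.2 hy)⟩

lemma le_cdf_quant {u : ℝ} (hu0 : 0 < u) (hu1 : u < 1) : u ≤ cdf ν (quant ν u) := by
  have hne := quant_set_nonempty (ν := ν) hu1
  have hbdd := quant_set_bddBelow (ν := ν) hu0
  have hcont : ContinuousWithinAt (cdf ν) (Ici (quant ν u)) (quant ν u) :=
    (cdf ν).right_continuous _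
  have : Tendsto (cdf ν) (𝓝[>] (quant ν u)) (𝓝 (cdf ν (quant ν u))) :=
    hcont.tendsto.mono_left (nhdsWithin_mono _ Ioi_subset_Ici_self)
  refine ge_of_tendsto this ?_
  filter_upwards [self_mem_nhdsWithin] with x hx
  obtain ⟨s, hs, hsx⟩ := csInf_lt_iff hbdd hne |>.1 hx
  exact le_trans hs ((cdf ν).mono hsx.le)

lemma quant_le_iff {u x : ℝ} (hu0 : 0 < u) (hu1 : u < 1) :
    quant ν u ≤ x ↔ u ≤ cdf ν x := by
  constructor
  · intro h
    exact le_trans (le_cdf_quant hu0 hu1) ((cdf ν).mono h)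
  · intro h
    exact csInf_le (quant_set_bddBelow hu0) h

lemma monotoneOn_quant : MonotoneOn (quant ν) (Ioo 0 1) := by
  intro u hu v hv huv
  exact le_csInf (quant_set_nonempty hv.2) fun x hx =>
    csInf_le (quant_set_bddBelow hu.1) (le_trans huv hx)

lemma aemeasurable_quant : AEMeasurable (quant ν) (volume.restrict (Ioo 0 1)) :=
  aemeasurable_restrict_of_monotoneOn measurableSet_Ioo monotoneOn_quant

instance : IsProbabilityMeasure (volume.restrict (Ioo (0:ℝ) 1)) :=
  ⟨by rw [Measure.restrict_apply_univ]; simp⟩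

lemma map_quant : Measure.map (quant ν) (volume.restrict (Ioo 0 1)) = ν := by
  have hmap : IsProbabilityMeasure (Measure.map (quant ν) (volume.restrict (Ioo (0:ℝ) 1))) :=
    Measure.isProbabilityMeasure_map aemeasurable_quant
  refine Measure.ext_of_Iic _ _ fun x => ?_
  rw [Measure.map_apply_of_aemeasurable aemeasurable_quant measurableSet_Iic,
    Measure.restrict_apply' measurableSet_Ioo]
  rw [← ofReal_cdf ν x]
  set c := cdf ν x with hc
  have hc0 : 0 ≤ c := cdf_nonneg ν x
  have hc1 : c ≤ 1 := cdf_le_one ν x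
  have hset : quant ν ⁻¹' Iic x ∩ Ioo 0 1 = Iic c ∩ Ioo 0 1 := by
    ext u
    simp only [mem_inter_iff, mem_preimage, mem_Iic, mem_Ioo, and_congr_left_iff]
    intro hu
    rw [quant_le_iff hu.1 hu.2]
  rw [hset]
  rcases lt_or_ge c 1 with h1 | h1
  · have : Iic c ∩ Ioo 0 1 = Ioc 0 c := by
      ext u
      simp only [mem_inter_iff, mem_Iic, mem_Ioo, mem_Ioc]
      constructor
      · rintro ⟨h, h2, _⟩; exact ⟨h2, h⟩
      · rintro ⟨h2, h⟩; exact ⟨h, h2, lt_of_le_of_lt h h1⟩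
    rw [this, Real.volume_Ioc]; simp
  · have hc : c = 1 := le_antisymm hc1 h1
    have : Iic c ∩ Ioo 0 1 = Ioo 0 1 := by
      rw [inter_eq_right]
      intro u hu
      simp only [mem_Iic]
      exact hc ▸ hu.2.le
    rw [this, Real.volume_Ioo, hc]
    simp

lemma integral_quant (g : ℝ → ℝ) (hg : AEStronglyMeasurable g ν) :
    ∫ x, g x ∂ν = ∫ u in Ioo (0:ℝ) 1, g (quant ν u) := by
  conv_lhs => rw [← map_quant (ν := ν)]
  rw [integral_map aemeasurable_quant (by rwa [map_quant])]

lemma memLp_quant_comp {p : ENNReal} (g : ℝ → ℝ) (hg : MemLp g p ν) :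
    MemLp (fun u => g (quant ν u)) p (volume.restrict (Ioo (0:ℝ) 1)) := by
  rw [← map_quant (ν := ν)] at hg
  exact (memLp_map_measure_iff hg.aestronglyMeasurable aemeasurable_quant).mp hg

lemma integrable_L2_mul {α : Type*} [MeasurableSpace α] {m : Measure α} {f g : α → ℝ}
    (hf : MemLp f 2 m) (hg : MemLp g 2 m) : Integrable (fun x => f x * g x) m := by
  refine Integrable.mono' ((hf.integrable_sq.add hg.integrable_sq).div_const 2)
    (hf.aestronglyMeasurable.mul hg.aestronglyMeasurable) (ae_of_all _ fun x => ?_)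
  simp only [Pi.add_apply, Pi.div_apply]
  rw [Real.norm_eq_abs, abs_mul]
  nlinarith [sq_nonneg (|f x| - |g x|), sq_abs (f x), sq_abs (g x), abs_nonneg (f x),
    abs_nonneg (g x)]

lemma measurable_finset_sup' {ι Ω : Type*} [MeasurableSpace Ω] {s : Finset ι} (hs : s.Nonempty)
    {f : ι → Ω → ℝ} (hf : ∀ i, Measurable (f i)) :
    Measurable fun ω => s.sup' hs (fun i => f i ω) := by
  induction hs using Finset.Nonempty.cons_induction with
  | singleton i => exact hf i
  | cons i s his hs ih =>
      have : (fun ω => (Finset.cons i s his).sup' (Finset.cons_nonempty his) (fun j => f j ω))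
          = fun ω => f i ω ⊔ s.sup' hs (fun j => f j ω) := by
        funext ω; exact Finset.sup'_cons hs (fun j => f j ω)
      rw [this]
      exact (hf i).sup ih

/-- For i.i.d. real random variables `ξ_1,…,ξ_k` (`k ≥ 1`) with
finite mean and finite variance `D[ξ_1]`,
`E[max(ξ_1,…,ξ_k)] ≤ E[ξ_1] + ((k-1)/√(2k-1))·√(D[ξ_1])`. -/
theorem stmt9 {Ω : Type*} [MeasurableSpace Ω] (μ : Measure Ω)
    [IsProbabilityMeasure μ] {k : ℕ} (hk : 0 < k)
    (ξ : Fin k → Ω → ℝ) (hmeas : ∀ i, Measurable (ξ i))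
    (hindep : iIndepFun ξ μ)
    (hident : ∀ i, Measure.map (ξ i) μ = Measure.map (ξ ⟨0, hk⟩) μ)
    (hL2 : MemLp (ξ ⟨0, hk⟩) 2 μ) :
    ∫ ω, Finset.univ.sup' (Finset.univ_nonempty_iff.2 ⟨⟨0, hk⟩⟩) (fun i => ξ i ω) ∂μ
      ≤ (∫ ω, ξ ⟨0, hk⟩ ω ∂μ)
        + ((k : ℝ) - 1) / Real.sqrt (2 * (k : ℝ) - 1)
          * Real.sqrt (variance (ξ ⟨0, hk⟩) μ) := by
  classical
  set i0 : Fin k := ⟨0, hk⟩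
  set M : Ω → ℝ := fun ω => Finset.univ.sup' (Finset.univ_nonempty_iff.2 ⟨i0⟩) (fun i => ξ i ω)
    with hM_def
  have hMmeas : Measurable M := measurable_finset_sup' _ hmeas
  set ν : Measure ℝ := Measure.map (ξ i0) μ with hν_def
  have hν : IsProbabilityMeasure ν := Measure.isProbabilityMeasure_map (hmeas i0).aemeasurable
  set ρ : Measure ℝ := Measure.map M μ with hρ_def
  have hρ : IsProbabilityMeasure ρ := Measure.isProbabilityMeasure_map hMmeas.aemeasurable
  -- the cdf of the max is the k-th power of the cdf
  have hcdf : ∀ x, cdf ρ x = (cdf ν x) ^ k := by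
    intro x
    have hIic : M ⁻¹' Set.Iic x = ⋂ i, ξ i ⁻¹' Set.Iic x := by
      ext ω
      simp [hM_def, Finset.sup'_le_iff, Set.mem_iInter]
    have hmeasx : ∀ i, μ (ξ i ⁻¹' Set.Iic x) = ν (Set.Iic x) := fun i => by
      rw [← Measure.map_apply (hmeas i) measurableSet_Iic, hident i]
    rw [cdf_eq_real ρ x, cdf_eq_real ν x, measureReal_def, measureReal_def, hρ_def,
      Measure.map_apply hMmeas measurableSet_Iic, hIic,
      hindep.meas_iInter (fun i => ⟨Set.Iic x, measurableSet_Iic, rfl⟩)]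
    simp_rw [hmeasx]
    rw [Finset.prod_const, Finset.card_univ, Fintype.card_fin, ENNReal.toReal_pow]
  -- quantile of ρ
  have hq : ∀ u ∈ Set.Ioo (0:ℝ) 1, quant ρ u = quant ν (u ^ ((k:ℝ)⁻¹)) := by
    rintro u ⟨hu0, hu1⟩
    have hkR : ((k:ℝ))⁻¹ ≠ 0 := by positivity
    have hw0 : 0 < u ^ ((k:ℝ)⁻¹) := Real.rpow_pos_of_pos hu0 _
    have hw1 : u ^ ((k:ℝ)⁻¹) < 1 := Real.rpow_lt_one hu0.le hu1 (by positivity)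
    refine le_antisymm ?_ ?_
    · rw [quant_le_iff hu0 hu1, hcdf]
      have h1 := le_cdf_quant hw0 hw1 (ν := ν)
      calc u = (u ^ ((k:ℝ)⁻¹)) ^ k := (Real.rpow_inv_natCast_pow hu0.le hk.ne').symm
        _ ≤ (cdf ν (quant ν (u ^ ((k:ℝ)⁻¹)))) ^ k := pow_le_pow_left₀ hw0.le h1 k
    · rw [quant_le_iff hw0 hw1]
      have h1 := le_cdf_quant hu0 hu1 (ν := ρ)
      rw [hcdf] at h1
      calc u ^ ((k:ℝ)⁻¹) ≤ ((cdf ν (quant ρ u)) ^ k) ^ ((k:ℝ)⁻¹) :=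
            Real.rpow_le_rpow hu0.le h1 (by positivity)
        _ = cdf ν (quant ρ u) := Real.pow_rpow_inv_natCast (cdf_nonneg ν _) hk.ne' 
  -- integrability of each ξ i and of M
  have hint0 : Integrable (ξ i0) μ :=
    memLp_one_iff_integrable.mp (hL2.mono_exponent one_le_two)
  have hintν : Integrable (id : ℝ → ℝ) ν := by
    rw [hν_def, integrable_map_measure aestronglyMeasurable_id (hmeas i0).aemeasurable]
    exact hint0
  have hint : ∀ i, Integrable (ξ i) μ := by
    intro i
    have : Integrable (id : ℝ → ℝ) (Measure.map (ξ i) μ) := by rw [hident i]; exact hintν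
    rw [integrable_map_measure aestronglyMeasurable_id (hmeas i).aemeasurable] at this
    exact this
  have hMint : Integrable M μ := by
    refine Integrable.mono' (integrable_finset_sum Finset.univ fun i _ => (hint i).abs)
      hMmeas.aestronglyMeasurable (ae_of_all _ fun ω => ?_)
    obtain ⟨j, -, hj⟩ := Finset.exists_mem_eq_sup' (Finset.univ_nonempty_iff.2 ⟨i0⟩)
      (fun i => ξ i ω)
    rw [Real.norm_eq_abs, show M ω = ξ j ω from hj]
    exact Finset.single_le_sum (fun i _ => abs_nonneg (ξ i ω)) (Finset.mem_univ j)
  -- L² facts for the quantile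
  have hνL2 : MemLp (fun x : ℝ => x) 2 ν := by
    rw [hν_def]
    exact (memLp_map_measure_iff aestronglyMeasurable_id (hmeas i0).aemeasurable).mpr hL2
  have hqL2 : MemLp (fun u => quant ν u) 2 (volume.restrict (Set.Ioo (0:ℝ) 1)) :=
    memLp_quant_comp (fun x => x) hνL2
  set I : Set ℝ := Set.Ioo (0:ℝ) 1 with hI_def
  set q : ℝ → ℝ := fun u => quant ν u with hq_def
  set μ0 : ℝ := ∫ ω, ξ i0 ω ∂μ with hμ0_def
  have hμ0ν : μ0 = ∫ x, x ∂ν := by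
    rw [hμ0_def, hν_def]
    exact (integral_map (hmeas i0).aemeasurable measurable_id'.aestronglyMeasurable).symm
  have hμ0q : μ0 = ∫ u in I, q u := by
    rw [hμ0ν, integral_quant (fun x => x) aestronglyMeasurable_id]
  -- expectation of the max as an integral of the quantile of ρ
  have hEM : ∫ ω, M ω ∂μ = ∫ u in I, quant ν (u ^ ((k:ℝ)⁻¹)) := by
    rw [show ∫ ω, M ω ∂μ = ∫ x, x ∂ρ by
      rw [hρ_def]
      exact (integral_map hMmeas.aemeasurable measurable_id'.aestronglyMeasurable).symm,
      integral_quant (ν := ρ) (fun x => x) aestronglyMeasurable_id]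
    exact setIntegral_congr_fun measurableSet_Ioo fun u hu => by rw [hq u hu]
  -- change of variables
  set w : ℝ → ℝ := fun v => (k:ℝ) * v ^ (k-1) with hw_def
  have himg : (fun v : ℝ => v ^ k) '' I = I := by
    apply Set.Subset.antisymm
    · rintro y ⟨v, hv, rfl⟩
      exact ⟨pow_pos hv.1 k, pow_lt_one₀ hv.1.le hv.2 hk.ne'⟩
    · rintro y hy
      refine ⟨y ^ ((k:ℝ)⁻¹), ⟨Real.rpow_pos_of_pos hy.1 _,
        Real.rpow_lt_one hy.1.le hy.2 (by positivity)⟩, ?_⟩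
      exact Real.rpow_inv_natCast_pow hy.1.le hk.ne' 
  have hinj : Set.InjOn (fun v : ℝ => v ^ k) I :=
    (pow_left_strictMonoOn₀ hk.ne').injOn.mono fun v hv => hv.1.le
  have hcov : ∫ u in I, quant ν (u ^ ((k:ℝ)⁻¹)) = ∫ v in I, w v * q v := by
    conv_lhs => rw [← himg]
    rw [integral_image_eq_integral_abs_deriv_smul measurableSet_Ioo
      (fun v _ => (hasDerivAt_pow k v).hasDerivWithinAt) hinj _]
    refine setIntegral_congr_fun measurableSet_Ioo fun v hv => ?_
    have h1 : ((v ^ k : ℝ)) ^ ((k:ℝ)⁻¹) = v := Real.pow_rpow_inv_natCast hv.1.le hk.ne'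
    have h2 : |(k:ℝ) * v ^ (k-1)| = (k:ℝ) * v ^ (k-1) :=
      abs_of_nonneg (mul_nonneg (Nat.cast_nonneg k) (pow_nonneg hv.1.le _))
    rw [smul_eq_mul, h1, h2]
  -- the weight integrals
  have hk1 : ((k:ℕ) - 1) + 1 = k := Nat.sub_add_cancel hk
  have hkR : (0:ℝ) < k := Nat.cast_pos.mpr hk
  have h2k : (0:ℝ) < 2*(k:ℝ) - 1 := by
    have : (1:ℝ) ≤ k := Nat.one_le_cast.mpr hk
    linarith
  have hwint : ∫ v in I, w v ∂volume = 1 := by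
    rw [hI_def, ← integral_Ioc_eq_integral_Ioo,
      ← intervalIntegral.integral_of_le (zero_le_one (α := ℝ))]
    rw [hw_def]
    simp only []
    rw [intervalIntegral.integral_const_mul, integral_pow, hk1]
    have : ((k:ℝ)) ≠ 0 := hkR.ne'
    field_simp
    rw [one_pow, zero_pow hk.ne', Nat.cast_sub hk]; push_cast; ring
  have hw2int : ∫ v in I, (w v - 1)^2 ∂volume = ((k:ℝ)-1)^2 / (2*(k:ℝ)-1) := by
    have e : ∀ v:ℝ, (w v - 1)^2 = (k:ℝ)^2 * v^((k-1)*2) - (2*(k:ℝ)) * v^(k-1) + 1 :=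
      fun v => by rw [hw_def]; ring
    simp_rw [e]
    rw [hI_def, ← integral_Ioc_eq_integral_Ioo,
      ← intervalIntegral.integral_of_le (zero_le_one (α := ℝ))]
    have i1 : IntervalIntegrable (fun v:ℝ => (k:ℝ)^2 * v^((k-1)*2)) volume 0 1 :=
      (Continuous.mul continuous_const (continuous_pow _)).intervalIntegrable _ _
    have i2 : IntervalIntegrable (fun v:ℝ => (2*(k:ℝ)) * v^(k-1)) volume 0 1 :=
      (Continuous.mul continuous_const (continuous_pow _)).intervalIntegrable _ _
    have i3 : IntervalIntegrable (fun _:ℝ => (1:ℝ)) volume 0 1 :=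
      intervalIntegrable_const
    rw [intervalIntegral.integral_add (i1.sub i2) i3, intervalIntegral.integral_sub i1 i2,
      intervalIntegral.integral_const_mul, intervalIntegral.integral_const_mul,
      integral_pow, integral_pow, hk1]
    have hc1 : (((k-1)*2 : ℕ) : ℝ) + 1 = 2*(k:ℝ) - 1 := by
      rw [Nat.cast_mul, Nat.cast_sub hk]
      push_cast
      ring
    have hc2 : ((k-1)*2 : ℕ) + 1 ≠ 0 := Nat.succ_ne_zero _
    rw [intervalIntegral.integral_const]
    simp only [one_pow, ne_eq, zero_pow (Nat.succ_ne_zero _), zero_pow hk.ne', smul_eq_mul, mul_one, sub_zero]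
    rw [hc1]
    simp only [Nat.cast_sub hk, Nat.cast_one, sub_add_cancel]
    have : (2*(k:ℝ)-1) ≠ 0 := h2k.ne'
    field_simp
    have h3 : (-1 + (k:ℝ) * 2)⁻¹ * (-1 + (k:ℝ) * 2) = 1 := inv_mul_cancel₀ (by linarith)
    linear_combination h3
  -- L² facts for the weight
  have hwmeas : Measurable w := by fun_prop
  have hwL2 : MemLp w 2 (volume.restrict I) := by
    refine MemLp.of_bound hwmeas.aestronglyMeasurable (k:ℝ) ?_
    filter_upwards [ae_restrict_mem measurableSet_Ioo] with v hv
    rw [Real.norm_eq_abs,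
      abs_of_nonneg (mul_nonneg (Nat.cast_nonneg k) (pow_nonneg hv.1.le _) : (0:ℝ) ≤ w v)]
    calc (k:ℝ) * v ^ (k-1) ≤ (k:ℝ) * 1 := by
          gcongr
          exact pow_le_one₀ hv.1.le hv.2.le
      _ = k := mul_one _
  have hwm1L2 : MemLp (fun v => w v - 1) 2 (volume.restrict I) := hwL2.sub (memLp_const 1)
  have hqm0L2 : MemLp (fun v => q v - μ0) 2 (volume.restrict I) := hqL2.sub (memLp_const μ0)
  -- variance as an integral of the quantile
  have hvar : variance (ξ i0) μ = ∫ v in I, (q v - μ0)^2 := by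
    have h1 : variance (ξ i0) μ = ∫ ω, (ξ i0 ω - μ0)^2 ∂μ := by
      rw [variance_eq_integral hL2.1.aemeasurable]
    have h2 : ∫ ω, (ξ i0 ω - μ0)^2 ∂μ = ∫ x, (x - μ0)^2 ∂ν := by
      rw [hν_def]
      exact (integral_map (hmeas i0).aemeasurable
        ((continuous_id.sub continuous_const).pow 2).aestronglyMeasurable).symm
    have h3 := integral_quant (ν := ν) (fun x => (x - μ0)^2)
      ((continuous_id.sub continuous_const).pow 2).aestronglyMeasurable
    rw [h1, h2, h3]
  have hvar0 : 0 ≤ ∫ v in I, (q v - μ0)^2 := by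
    exact setIntegral_nonneg measurableSet_Ioo fun v _ => sq_nonneg _
  -- splitting the integral
  have ia : Integrable (fun v => (w v - 1) * (q v - μ0)) (volume.restrict I) :=
    integrable_L2_mul hwm1L2 hqm0L2
  have ib : Integrable (fun v => μ0 * w v) (volume.restrict I) :=
    (hwL2.integrable one_le_two).const_mul μ0
  have ic : Integrable (fun v => q v - μ0) (volume.restrict I) :=
    (hqL2.integrable one_le_two).sub (integrable_const μ0)
  have hsplit : ∫ v in I, w v * q v = (∫ v in I, (w v - 1) * (q v - μ0)) + μ0 := by
    have e : ∀ v, w v * q v = ((w v - 1) * (q v - μ0) + μ0 * w v) + (q v - μ0) :=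
      fun v => by ring
    simp_rw [e]
    have iab : Integrable (fun v => (w v - 1) * (q v - μ0) + μ0 * w v) (volume.restrict I) :=
      ia.add ib
    rw [integral_add iab ic, integral_add ia ib, integral_const_mul,
      hwint, integral_sub (hqL2.integrable one_le_two) (integrable_const μ0),
      ← hμ0q, integral_const]
    simp
  -- Cauchy-Schwarz
  have hCS : ∫ v in I, (w v - 1) * (q v - μ0)
      ≤ Real.sqrt (((k:ℝ)-1)^2 / (2*(k:ℝ)-1)) * Real.sqrt (variance (ξ i0) μ) := by
    have habsL2 : MemLp (fun v => |w v - 1|) 2 (volume.restrict I) := by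
      simpa [Real.norm_eq_abs] using hwm1L2.norm
    have habsL2' : MemLp (fun v => |q v - μ0|) 2 (volume.restrict I) := by
      simpa [Real.norm_eq_abs] using hqm0L2.norm
    have step1 : ∫ v in I, (w v - 1) * (q v - μ0) ≤ ∫ v in I, |w v - 1| * |q v - μ0| := by
      refine integral_mono ia (integrable_L2_mul habsL2 habsL2') fun v => ?_
      rw [← abs_mul]
      exact le_abs_self _
    have hconj : Real.HolderConjugate 2 2 := Real.HolderConjugate.two_two
    have h2R : ENNReal.ofReal (2:ℝ) = 2 := by norm_num
    have step2 := integral_mul_le_Lp_mul_Lq_of_nonneg hconj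
      (ae_of_all _ fun v => abs_nonneg (w v - 1))
      (ae_of_all _ fun v => abs_nonneg (q v - μ0))
      (h2R ▸ habsL2) (h2R ▸ habsL2')
    have epow : ∀ x : ℝ, |x| ^ (2:ℝ) = x^2 := fun x => by
      rw [show ((2:ℝ)) = ((2:ℕ):ℝ) by norm_num, Real.rpow_natCast, sq_abs]
    simp_rw [epow] at step2
    rw [← Real.sqrt_eq_rpow, ← Real.sqrt_eq_rpow] at step2
    rw [hw2int, ← hvar] at step2
    exact step1.trans step2
  have hsqrt : Real.sqrt (((k:ℝ)-1)^2 / (2*(k:ℝ)-1))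
      = ((k:ℝ)-1) / Real.sqrt (2*(k:ℝ)-1) := by
    rw [Real.sqrt_div (sq_nonneg _), Real.sqrt_sq (by
      have : (1:ℝ) ≤ k := Nat.one_le_cast.mpr hk
      linarith)]
  calc ∫ ω, M ω ∂μ = ∫ v in I, w v * q v := by rw [hEM, hcov]
    _ = (∫ v in I, (w v - 1) * (q v - μ0)) + μ0 := hsplit
    _ ≤ Real.sqrt (((k:ℝ)-1)^2 / (2*(k:ℝ)-1)) * Real.sqrt (variance (ξ i0) μ) + μ0 := by
        gcongr
    _ = μ0 + ((k:ℝ)-1) / Real.sqrt (2*(k:ℝ)-1) * Real.sqrt (variance (ξ i0) μ) := by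
        rw [hsqrt]; ring
end

section
/- Let G be the standard adjacency matrix (entries 0 or ε) of an acyclic directed graph on n vertices with longest path length p, let 𝒯_1,…,𝒯_k be diagonal matrices 𝒯_i = diag(τ_{1i},…,τ_{ni}) with real entries τ_{ji} ≥ 0, and let A(i) = (E ⊕ 𝒯_i ⊗ G^T)^{⊗p} ⊗ 𝒯_i and A_k = A(k) ⊗ ⋯ ⊗ A(1). Then ‖A_k‖ ≥ ‖𝒯_1 + ⋯ + 𝒯_k‖ = max_{1≤j≤n} Σ_{i=1}^{k} τ_{ji}. -/
/-- The cycle transition matrix `A = (E ⊕ 𝒯 ⊗ Gᵀ)^{⊗p} ⊗ 𝒯` of an acyclic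
fork-join network with standard adjacency matrix `G`, longest path length `p`,
and service-time diagonal matrix `𝒯 = diag τ`. -/
noncomputable def mpA {n : ℕ} (G : Matrix (Fin n) (Fin n) MP) (p : ℕ)
    (τ : Fin n → ℝ) : Matrix (Fin n) (Fin n) MP :=
  mpMul (mpPow (mpAdd (mpOne n) (mpMul (diagM τ) G.transpose)) p) (diagM τ)

/-- The accumulated matrix `A_k = A(k) ⊗ ⋯ ⊗ A(1)` (here the `k`-th service
cycle uses the service times `τ (k-1)`, i.e. cycles are indexed from `0`);
`A_0 = E`. -/
noncomputable def mpAk {n : ℕ} (G : Matrix (Fin n) (Fin n) MP) (p : ℕ)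
    (τ : ℕ → Fin n → ℝ) : ℕ → Matrix (Fin n) (Fin n) MP
  | 0 => mpOne n
  | k + 1 => mpMul (mpA G p (τ k)) (mpAk G p τ k)

lemma mpMul_entry_le {n : ℕ} (X Y : Matrix (Fin n) (Fin n) MP) (i k j : Fin n) :
    X i k + Y k j ≤ mpMul X Y i j := by
  exact Finset.le_sup (f := fun k => X i k + Y k j) (Finset.mem_univ k)

lemma mpPow_diag {n : ℕ} (M : Matrix (Fin n) (Fin n) MP) (p : ℕ) (j : Fin n) :
    (0 : MP) ≤ mpPow (mpAdd (mpOne n) M) p j j := by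
  induction p with
  | zero => simp [mpPow, mpOne]
  | succ q ih =>
      have h1 : (0 : MP) ≤ mpAdd (mpOne n) M j j := by
        simp only [mpAdd, Matrix.of_apply, mpOne]
        exact le_sup_of_le_left (by simp)
      calc (0 : MP) = 0 + 0 := by simp
        _ ≤ mpAdd (mpOne n) M j j + mpPow (mpAdd (mpOne n) M) q j j := add_le_add h1 ih
        _ ≤ mpPow (mpAdd (mpOne n) M) (q + 1) j j := mpMul_entry_le _ _ j j j

lemma mpA_diag {n : ℕ} (G : Matrix (Fin n) (Fin n) MP) (p : ℕ) (τ : Fin n → ℝ)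
    (j : Fin n) : ((τ j : ℝ) : MP) ≤ mpA G p τ j j := by
  have h2 : diagM τ j j = ((τ j : ℝ) : MP) := by simp [diagM]
  calc ((τ j : ℝ) : MP) = 0 + ((τ j : ℝ) : MP) := by simp
    _ ≤ mpPow (mpAdd (mpOne n) (mpMul (diagM τ) G.transpose)) p j j + diagM τ j j := by
        rw [h2]; exact add_le_add_left (mpPow_diag _ p j) _
    _ ≤ mpA G p τ j j := mpMul_entry_le _ _ j j j

lemma mpAk_diag {n : ℕ} (G : Matrix (Fin n) (Fin n) MP) (p : ℕ)
    (τ : ℕ → Fin n → ℝ) (k : ℕ) (j : Fin n) :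
    ((∑ i ∈ Finset.range k, τ i j : ℝ) : MP) ≤ mpAk G p τ k j j := by
  induction k with
  | zero => simp [mpAk, mpOne]
  | succ m ih =>
      rw [Finset.sum_range_succ, add_comm]
      calc ((τ m j + ∑ i ∈ Finset.range m, τ i j : ℝ) : MP)
          = ((τ m j : ℝ) : MP) + ((∑ i ∈ Finset.range m, τ i j : ℝ) : MP) := by push_cast; rfl
        _ ≤ mpA G p (τ m) j j + mpAk G p τ m j j := add_le_add (mpA_diag G p (τ m) j) ih
        _ ≤ mpAk G p τ (m + 1) j j := mpMul_entry_le _ _ j j j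

/-- For a standard adjacency matrix `G` of an acyclic digraph with
longest path length `p` and diagonal matrices `𝒯_i` with nonnegative real
entries, `‖A_k‖ ≥ ‖𝒯_1 + ⋯ + 𝒯_k‖ = max_j Σ_{i=1}^k τ_{ji}`. -/
theorem stmt11 {n : ℕ} (G : Matrix (Fin n) (Fin n) MP)
    (hG : ∀ i j, G i j = 0 ∨ G i j = ⊥)
    (hacyc : mpAcyclic G) (p : ℕ)
    (hub : ∀ q i j, mpPath G q i j → q ≤ p)
    (hex : ∃ i j, mpPath G p i j)
    (τ : ℕ → Fin n → ℝ) (hτ : ∀ i j, 0 ≤ τ i j) (k : ℕ) :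
    (Finset.univ.sup fun j : Fin n => ((∑ i ∈ Finset.range k, τ i j : ℝ) : MP))
      ≤ mpNorm (mpAk G p τ k) := by
  apply Finset.sup_le
  intro j _
  refine le_trans (mpAk_diag G p τ k j) ?_
  exact le_trans (Finset.le_sup (Finset.mem_univ j))
    (Finset.le_sup (f := fun i => Finset.univ.sup fun j' => mpAk G p τ k i j')
      (Finset.mem_univ j))
end

section
/- Let G be the standard adjacency matrix (entries 0 or ε) of an acyclic directed graph on n vertices with longest path length p, let 𝒯_1,…,𝒯_k be diagonal matrices 𝒯_i = diag(τ_{1i},…,τ_{ni}) with real entries τ_{ji} ≥ 0, and let A(i) = (E ⊕ 𝒯_i ⊗ G^T)^{⊗p} ⊗ 𝒯_i and A_k = A(k) ⊗ ⋯ ⊗ A(1). Then ‖A_k‖ ≤ Σ_{i=1}^{k} ‖𝒯_i‖ + p · max_{1≤i≤k} ‖𝒯_i‖, where ‖𝒯_i‖ = max_{1≤j≤n} τ_{ji}. -/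
-- auxiliary lemmas
lemma mul_diag {n : ℕ} (X : Matrix (Fin n) (Fin n) MP) (d : Fin n → ℝ) (a b : Fin n) :
    mpMul X (diagM d) a b = X a b + ((d b : ℝ) : MP) := by
  unfold mpMul diagM
  simp only [Matrix.of_apply]
  apply le_antisymm
  · apply Finset.sup_le
    intro c _
    by_cases h : c = b
    · subst h; simp
    · rw [if_neg h, WithBot.add_bot]; exact bot_le
  · have := Finset.le_sup (f := fun k => X a k + (if k = b then ((d k : ℝ):MP) else ⊥))
      (Finset.mem_univ b)
    simpa using this

lemma diag_mul {n : ℕ} (X : Matrix (Fin n) (Fin n) MP) (d : Fin n → ℝ) (a b : Fin n) :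
    mpMul (diagM d) X a b = ((d a : ℝ) : MP) + X a b := by
  unfold mpMul diagM
  simp only [Matrix.of_apply]
  apply le_antisymm
  · apply Finset.sup_le
    intro c _
    by_cases h : a = c
    · subst h; simp
    · rw [if_neg h, WithBot.bot_add]; exact bot_le
  · have := Finset.le_sup (f := fun k => (if a = k then ((d a : ℝ):MP) else ⊥) + X k b)
      (Finset.mem_univ a)
    simpa using this

lemma path_refl {n : ℕ} (X : Matrix (Fin n) (Fin n) MP) (a : Fin n) : mpPath X 0 a a :=
  ⟨fun _ => a, rfl, rfl, fun t ht => absurd ht (Nat.not_lt_zero t)⟩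

lemma path_snoc {n : ℕ} {X : Matrix (Fin n) (Fin n) MP} {q : ℕ} {b c a : Fin n}
    (h : mpPath X q b c) (he : X c a ≠ ⊥) : mpPath X (q + 1) b a := by
  obtain ⟨f, hf0, hfq, hfe⟩ := h
  refine ⟨fun t => if t ≤ q then f t else a, by simp [hf0], by simp, ?_⟩
  intro t ht
  dsimp only
  by_cases h1 : t < q
  · rw [if_pos (by omega), if_pos (by omega)]
    exact hfe t h1
  · have : t = q := by omega
    subst this
    rw [if_pos le_rfl, if_neg (by omega), hfq]
    exact he

lemma path_concat {n : ℕ} {X : Matrix (Fin n) (Fin n) MP} {q1 q2 : ℕ} {i j l : Fin n}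
    (h1 : mpPath X q1 i j) (h2 : mpPath X q2 j l) : mpPath X (q1 + q2) i l := by
  obtain ⟨f, hf0, hfq, hfe⟩ := h1
  obtain ⟨g, hg0, hgq, hge⟩ := h2
  refine ⟨fun t => if t ≤ q1 then f t else g (t - q1), by simp [hf0], ?_, ?_⟩
  · dsimp only
    by_cases h : q2 = 0
    · subst h; simp only [Nat.add_zero, if_pos le_rfl, hfq]
      rw [← hg0, ← hgq]
    · rw [if_neg (by omega)]
      simpa using hgq
  · intro t ht
    dsimp only
    rcases lt_trichotomy t q1 with h | h | h
    · rw [if_pos (by omega), if_pos (by omega)]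
      exact hfe t h
    · subst h
      rw [if_pos le_rfl]
      by_cases h2' : q2 = 0
      · omega
      · rw [if_neg (by omega)]
        have : t + 1 - t = 1 := by omega
        rw [this, hfq, ← hg0]
        exact hge 0 (by omega)
    · rw [if_neg (by omega), if_neg (by omega)]
      have h3 : t - q1 < q2 := by omega
      have := hge (t - q1) h3
      have h4 : t + 1 - q1 = t - q1 + 1 := by omega
      rw [h4]
      exact this

open Classical in
noncomputable def pbnd {n : ℕ} (G : Matrix (Fin n) (Fin n) MP) (p : ℕ) (S T : ℝ) (a b : Fin n) : MP :=
  (Finset.range (p+1)).sup fun q => if mpPath G q b a then ((S + q * T : ℝ) : MP) else ⊥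

lemma le_pbnd {n : ℕ} {G : Matrix (Fin n) (Fin n) MP} {p q : ℕ} {S T : ℝ} {a b : Fin n}
    (hq : q ≤ p) (hpath : mpPath G q b a) : ((S + q * T : ℝ) : MP) ≤ pbnd G p S T a b := by
  classical
  have := Finset.le_sup (f := fun q => if mpPath G q b a then ((S + q * T : ℝ) : MP) else ⊥)
    (Finset.mem_range.2 (Nat.lt_succ_of_le hq))
  simpa [hpath, pbnd] using this

lemma pbnd_cases {n : ℕ} (G : Matrix (Fin n) (Fin n) MP) (p : ℕ) (S T : ℝ) (a b : Fin n) :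
    pbnd G p S T a b = ⊥ ∨
      ∃ q, q ≤ p ∧ mpPath G q b a ∧ pbnd G p S T a b = ((S + q * T : ℝ) : MP) := by
  classical
  obtain ⟨q, hq, hv⟩ := Finset.exists_mem_eq_sup' (Finset.nonempty_range_iff.2 (Nat.succ_ne_zero p))
    (fun q => if mpPath G q b a then ((S + q * T : ℝ) : MP) else ⊥)
  have hv' : pbnd G p S T a b = if mpPath G q b a then ((S + q * T : ℝ) : MP) else ⊥ := by
    rw [pbnd, ← Finset.sup'_eq_sup (Finset.nonempty_range_iff.2 (Nat.succ_ne_zero p))]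
    convert hv using 2
  by_cases hpath : mpPath G q b a
  · exact Or.inr ⟨q, Nat.lt_succ_iff.1 (Finset.mem_range.1 hq), hpath, by rw [hv', if_pos hpath]⟩
  · exact Or.inl (by rw [hv', if_neg hpath])

lemma sup_add_le {u v w z : MP} (h1 : u + w ≤ z) (h2 : v + w ≤ z) : (u ⊔ v) + w ≤ z := by
  rcases le_total u v with h | h
  · rwa [sup_eq_right.2 h]
  · rwa [sup_eq_left.2 h]

lemma B_bound {n : ℕ} (G : Matrix (Fin n) (Fin n) MP)
    (hG : ∀ i j, G i j = 0 ∨ G i j = ⊥) (p : ℕ)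
    (hub : ∀ q i j, mpPath G q i j → q ≤ p) (d : Fin n → ℝ) (Tm : ℝ)
    (hd : ∀ j, d j ≤ Tm) :
    ∀ r a b, mpPow (mpAdd (mpOne n) (mpMul (diagM d) G.transpose)) r a b
      ≤ pbnd G p 0 Tm a b := by
  intro r
  induction r with
  | zero =>
    intro a b
    show mpOne n a b ≤ _
    unfold mpOne
    simp only [Matrix.of_apply]
    by_cases h : a = b
    · subst h
      rw [if_pos rfl]
      have := le_pbnd (G := G) (S := 0) (T := Tm) (Nat.zero_le p) (path_refl G a)
      simpa using this
    · rw [if_neg h]; exact bot_le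
  | succ r IH =>
    intro a b
    show mpMul _ _ a b ≤ _
    unfold mpMul
    simp only [Matrix.of_apply]
    apply Finset.sup_le
    intro c _
    show mpAdd (mpOne n) (mpMul (diagM d) G.transpose) a c + _ ≤ _
    unfold mpAdd
    simp only [Matrix.of_apply]
    apply sup_add_le
    · by_cases h : a = c
      · subst h
        have h0 : mpOne n a a = 0 := by unfold mpOne; simp
        rw [h0, zero_add]
        exact IH a b
      · have h0 : mpOne n a c = ⊥ := by unfold mpOne; simp [h]
        rw [h0, WithBot.bot_add]; exact bot_le
    · rw [diag_mul, Matrix.transpose_apply]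
      rcases hG c a with hca | hca
      · rw [hca, add_zero]
        calc ((d a : ℝ) : MP) + mpPow _ r c b
            ≤ ((d a : ℝ) : MP) + pbnd G p 0 Tm c b := add_le_add le_rfl (IH c b)
          _ ≤ pbnd G p 0 Tm a b := by
            rcases pbnd_cases G p 0 Tm c b with h | ⟨q, hq, hpath, hval⟩
            · rw [h, WithBot.add_bot]; exact bot_le
            · rw [hval, ← WithBot.coe_add]
              have hedge : G c a ≠ ⊥ := by rw [hca]; exact WithBot.coe_ne_bot
              have hpath' : mpPath G (q + 1) b a := path_snoc hpath hedge
              have hq' : q + 1 ≤ p := hub _ _ _ hpath'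
              refine le_trans ?_ (le_pbnd hq' hpath')
              apply WithBot.coe_le_coe.2
              have := hd a
              push_cast
              nlinarith
      · rw [hca, WithBot.add_bot, WithBot.bot_add]; exact bot_le

lemma Ak_bound {n : ℕ} (G : Matrix (Fin n) (Fin n) MP)
    (hG : ∀ i j, G i j = 0 ∨ G i j = ⊥) (p : ℕ)
    (hub : ∀ q i j, mpPath G q i j → q ≤ p)
    (τ : ℕ → Fin n → ℝ) (Tm : ℕ → ℝ) (hτT : ∀ i j, τ i j ≤ Tm i) (T : ℝ) :
    ∀ m, (∀ i, i < m → Tm i ≤ T) → ∀ a b,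
      mpAk G p τ m a b ≤ pbnd G p (∑ i ∈ Finset.range m, Tm i) T a b := by
  intro m
  induction m with
  | zero =>
    intro _ a b
    show mpOne n a b ≤ _
    unfold mpOne
    simp only [Matrix.of_apply, Finset.range_zero, Finset.sum_empty]
    by_cases h : a = b
    · subst h
      rw [if_pos rfl]
      have := le_pbnd (G := G) (S := 0) (T := T) (Nat.zero_le p) (path_refl G a)
      simpa using this
    · rw [if_neg h]; exact bot_le
  | succ m IH =>
    intro hT a b
    have IH' := IH (fun i hi => hT i (Nat.lt_succ_of_lt hi))
    show mpMul (mpA G p (τ m)) (mpAk G p τ m) a b ≤ _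
    unfold mpMul
    simp only [Matrix.of_apply]
    apply Finset.sup_le
    intro c _
    have hA : mpA G p (τ m) a c
        = mpPow (mpAdd (mpOne n) (mpMul (diagM (τ m)) G.transpose)) p a c + ((τ m c : ℝ) : MP) := by
      rw [mpA, mul_diag]
    rw [hA]
    have hB := B_bound G hG p hub (τ m) (Tm m) (hτT m) p a c
    calc mpPow _ p a c + ((τ m c : ℝ) : MP) + mpAk G p τ m c b
        ≤ pbnd G p 0 (Tm m) a c + ((τ m c : ℝ) : MP)
            + pbnd G p (∑ i ∈ Finset.range m, Tm i) T c b :=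
          add_le_add (add_le_add hB le_rfl) (IH' c b)
      _ ≤ _ := by
        rcases pbnd_cases G p 0 (Tm m) a c with h1 | ⟨q1, hq1, hpath1, hval1⟩
        · rw [h1, WithBot.bot_add, WithBot.bot_add]; exact bot_le
        rcases pbnd_cases G p (∑ i ∈ Finset.range m, Tm i) T c b with h2 | ⟨q2, hq2, hpath2, hval2⟩
        · rw [h2, WithBot.add_bot]; exact bot_le
        rw [hval1, hval2, ← WithBot.coe_add, ← WithBot.coe_add]
        have hpath : mpPath G (q2 + q1) b a := path_concat hpath2 hpath1
        have hq : q2 + q1 ≤ p := hub _ _ _ hpath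
        refine le_trans ?_ (le_pbnd hq hpath)
        apply WithBot.coe_le_coe.2
        rw [Finset.sum_range_succ]
        have h1 := hτT m c
        have h2 := hT m (Nat.lt_succ_self m)
        have h3 : (q1 : ℝ) * Tm m ≤ (q1 : ℝ) * T :=
          mul_le_mul_of_nonneg_left h2 (Nat.cast_nonneg q1)
        push_cast
        nlinarith

/-- For a standard adjacency matrix `G` of an acyclic digraph
(`n ≥ 1` vertices) with longest path length `p` and diagonal matrices `𝒯_i`
with nonnegative real entries (`1 ≤ i ≤ k`, `k ≥ 1`),
`‖A_k‖ ≤ Σ_{i=1}^k ‖𝒯_i‖ + p · max_{1≤i≤k} ‖𝒯_i‖`, where `‖𝒯_i‖ = max_j τ_{ji}`. -/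
theorem stmt12 {n : ℕ} (hn : 0 < n) (G : Matrix (Fin n) (Fin n) MP)
    (hG : ∀ i j, G i j = 0 ∨ G i j = ⊥)
    (hacyc : mpAcyclic G) (p : ℕ)
    (hub : ∀ q i j, mpPath G q i j → q ≤ p)
    (hex : ∃ i j, mpPath G p i j)
    (τ : ℕ → Fin n → ℝ) (hτ : ∀ i j, 0 ≤ τ i j) (k : ℕ) (hk : 0 < k) :
    mpNorm (mpAk G p τ k)
      ≤ (((∑ i ∈ Finset.range k,
            Finset.univ.sup' (Finset.univ_nonempty_iff.2 ⟨⟨0, hn⟩⟩) fun j => τ i j)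
          + (p : ℝ) *
            ((Finset.range k).sup' (Finset.nonempty_range_iff.2 hk.ne') fun i =>
              Finset.univ.sup' (Finset.univ_nonempty_iff.2 ⟨⟨0, hn⟩⟩) fun j => τ i j) : ℝ) : MP) := by
  have hne : (Finset.univ : Finset (Fin n)).Nonempty := Finset.univ_nonempty_iff.2 ⟨⟨0, hn⟩⟩
  set Tm : ℕ → ℝ := fun i => Finset.univ.sup' (Finset.univ_nonempty_iff.2 ⟨⟨0, hn⟩⟩)
    fun j => τ i j with hTmdef
  set T : ℝ := (Finset.range k).sup' (Finset.nonempty_range_iff.2 hk.ne') fun i =>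
    Finset.univ.sup' (Finset.univ_nonempty_iff.2 ⟨⟨0, hn⟩⟩) fun j => τ i j with hTdef
  have hτT : ∀ i j, τ i j ≤ Tm i := fun i j => Finset.le_sup' (fun j => τ i j) (Finset.mem_univ j)
  have hT : ∀ i, i < k → Tm i ≤ T := fun i hi =>
    Finset.le_sup' _ (Finset.mem_range.2 hi)
  have hT0 : 0 ≤ T := le_trans (hτ 0 ⟨0, hn⟩) (le_trans (hτT 0 ⟨0, hn⟩) (hT 0 hk))
  have hbnd := Ak_bound G hG p hub τ Tm hτT T k hT
  unfold mpNorm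
  apply Finset.sup_le
  intro i _
  apply Finset.sup_le
  intro j _
  refine le_trans (hbnd i j) ?_
  rcases pbnd_cases G p (∑ i ∈ Finset.range k, Tm i) T i j with h | ⟨q, hq, _, hval⟩
  · rw [h]; exact bot_le
  · rw [hval]
    apply WithBot.coe_le_coe.2
    have hqp : (q : ℝ) ≤ (p : ℝ) := Nat.cast_le.2 hq
    nlinarith
end

section
/- Let G be the standard adjacency matrix of an acyclic directed graph on n vertices with longest path length p. For each k = 1,2,…, let 𝒯_k = diag(τ_{1k},…,τ_{nk}) be a random diagonal matrix whose entries τ_{ik} are nonnegative real random variables, let A(k) = (E ⊕ 𝒯_k ⊗ G^T)^{⊗p} ⊗ 𝒯_k and A_k = A(k) ⊗ ⋯ ⊗ A(1). If the random variables ‖𝒯_1‖, ‖𝒯_2‖, … (where ‖𝒯_k‖ = max_i τ_{ik}) are independent and identically distributed with finite mean and finite variance, then limsup_{k→∞} (1/k)·E[‖A_k‖] ≤ E[‖𝒯_1‖] = E[max_{1≤i≤n} τ_{i1}]. In particular the mean cycle time γ = lim_{k→∞} (1/k)E[‖A_k‖], whenever it exists, satisfies γ ≤ E[max_{1≤i≤n}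 τ_{i1}]. -/
namespace Stmt14Aux

lemma mpMul_apply {n : ℕ} (X Y : Matrix (Fin n) (Fin n) MP) (i j : Fin n) :
    mpMul X Y i j = Finset.univ.sup fun k => X i k + Y k j := rfl

lemma diag_mpMul {n : ℕ} (d : Fin n → ℝ) (Y : Matrix (Fin n) (Fin n) MP) (i j : Fin n) :
    mpMul (diagM d) Y i j = (d i : MP) + Y i j := by
  rw [mpMul_apply]
  apply le_antisymm
  · apply Finset.sup_le
    intro k _
    by_cases h : i = k
    · subst h; simp [diagM]
    · simp [diagM, h, WithBot.bot_add]
  · have := Finset.le_sup (f := fun k => diagM d i k + Y k j) (Finset.mem_univ i)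
    simpa [diagM] using this

lemma mpMul_diag {n : ℕ} (d : Fin n → ℝ) (Y : Matrix (Fin n) (Fin n) MP) (i j : Fin n) :
    mpMul Y (diagM d) i j = Y i j + (d j : MP) := by
  rw [mpMul_apply]
  apply le_antisymm
  · apply Finset.sup_le
    intro k _
    by_cases h : k = j
    · subst h; simp [diagM]
    · simp [diagM, h, WithBot.add_bot]
  · have := Finset.le_sup (f := fun k => Y i k + diagM d k j) (Finset.mem_univ j)
    simpa [diagM] using this

lemma mpOne_apply {n : ℕ} (i j : Fin n) :
    mpOne n i j = if i = j then (0 : MP) else ⊥ := rfl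

lemma mpAdd_apply {n : ℕ} (X Y : Matrix (Fin n) (Fin n) MP) (i j : Fin n) :
    mpAdd X Y i j = X i j ⊔ Y i j := rfl

end Stmt14Aux
namespace Stmt14Aux

variable {n : ℕ} {G : Matrix (Fin n) (Fin n) MP} {p : ℕ}

/-- rank: longest path length ending at `i`. -/
noncomputable def rk (G : Matrix (Fin n) (Fin n) MP) (i : Fin n) : ℕ :=
  sSup {q | ∃ j, mpPath G q j i}

lemma mem_rkSet (i : Fin n) : 0 ∈ {q | ∃ j, mpPath G q j i} :=
  ⟨i, fun _ => i, rfl, rfl, fun t ht => absurd ht (Nat.not_lt_zero t)⟩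

lemma rkSet_bdd (hub : ∀ q i j, mpPath G q i j → q ≤ p) (i : Fin n) :
    ∀ q ∈ {q | ∃ j, mpPath G q j i}, q ≤ p := by
  rintro q ⟨j, hq⟩; exact hub q j i hq

lemma rk_le (hub : ∀ q i j, mpPath G q i j → q ≤ p) (i : Fin n) : rk G i ≤ p :=
  csSup_le ⟨0, mem_rkSet i⟩ (rkSet_bdd hub i)

lemma rk_mem (hub : ∀ q i j, mpPath G q i j → q ≤ p) (i : Fin n) :
    rk G i ∈ {q | ∃ j, mpPath G q j i} :=
  Nat.sSup_mem ⟨0, mem_rkSet i⟩ ⟨p, fun q hq => rkSet_bdd hub i q hq⟩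

lemma rk_edge (hub : ∀ q i j, mpPath G q i j → q ≤ p) {l i : Fin n}
    (h : G l i ≠ ⊥) : rk G l + 1 ≤ rk G i := by
  obtain ⟨j, f, hf0, hfl, hstep⟩ := rk_mem hub l
  apply le_csSup ⟨p, fun q hq => rkSet_bdd hub i q hq⟩
  refine ⟨j, fun t => if t = rk G l + 1 then i else f t, ?_, by simp, ?_⟩
  · simp [hf0]
  · intro t ht
    rcases Nat.lt_or_ge t (rk G l) with h1 | h1
    · have h2 : t ≠ rk G l + 1 := by omega
      have h3 : t + 1 ≠ rk G l + 1 := by omega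
      simp only [h2, h3, if_false]
      exact hstep t h1
    · have h3 : t ≠ rk G l + 1 := by omega
      have h4 : t + 1 = rk G l + 1 := by omega
      simp only [if_neg h3, if_pos h4]
      have h2 : t = rk G l := by omega
      rw [h2, hfl]; exact h

lemma G_diag_bot (hG : ∀ i j, G i j = 0 ∨ G i j = ⊥) (hacyc : mpAcyclic G)
    (i : Fin n) : G i i = ⊥ := by
  rcases hG i i with h | h
  · exfalso
    apply hacyc i 1 le_rfl
    exact ⟨fun _ => i, rfl, rfl, fun t ht => by simp [h]⟩
  · exact h

end Stmt14Aux
namespace Stmt14Aux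

variable {n : ℕ} {G : Matrix (Fin n) (Fin n) MP} {p : ℕ}

lemma pow_bound (hG : ∀ i j, G i j = 0 ∨ G i j = ⊥) (hacyc : mpAcyclic G)
    (hub : ∀ q i j, mpPath G q i j → q ≤ p)
    (τ : Fin n → ℝ) (Nb : ℝ) (hNb0 : 0 ≤ Nb) (hNb : ∀ i, τ i ≤ Nb)
    (q : ℕ) (i j : Fin n) :
    mpPow (mpAdd (mpOne n) (mpMul (diagM τ) G.transpose)) q i j = ⊥ ∨
      (rk G j ≤ rk G i ∧
        mpPow (mpAdd (mpOne n) (mpMul (diagM τ) G.transpose)) q i j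
          ≤ (((rk G i - rk G j : ℕ) * Nb : ℝ) : MP)) := by
  set B := mpAdd (mpOne n) (mpMul (diagM τ) G.transpose) with hB
  have hBentry : ∀ i l : Fin n, B i l = (if i = l then (0:MP) else ⊥) ⊔ ((τ i : MP) + G l i) := by
    intro i l
    rw [hB, mpAdd_apply, mpOne_apply, diag_mpMul]
    rfl
  induction q generalizing i j with
  | zero =>
    by_cases h : i = j
    · subst h
      right
      refine ⟨le_rfl, ?_⟩
      simp [mpPow, mpOne_apply]
    · left; simp [mpPow, mpOne_apply, h]
  | succ q ih =>
    have hterm : ∀ l : Fin n, B i l + mpPow B q l j = ⊥ ∨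
        (rk G j ≤ rk G i ∧
          B i l + mpPow B q l j ≤ (((rk G i - rk G j : ℕ) * Nb : ℝ) : MP)) := by
      intro l
      rcases ih l j with hbot | ⟨hrlj, hle⟩
      · left; rw [hbot, WithBot.add_bot]
      by_cases hl : l = i
      · subst hl
        have hGll : G l l = ⊥ := G_diag_bot hG hacyc l
        have : B l l = 0 := by rw [hBentry, hGll, WithBot.add_bot]; simp
        right
        refine ⟨hrlj, ?_⟩
        rw [this, zero_add]
        exact hle
      · rcases hG l i with hGli | hGli
        · -- edge l → i
          have hedge : rk G l + 1 ≤ rk G i := rk_edge hub (by rw [hGli]; simp)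
          have hBil : B i l = (τ i : MP) := by
            rw [hBentry, hGli]
            have : i ≠ l := fun h => hl h.symm
            simp [this]
          right
          have hrji : rk G j ≤ rk G i := le_trans hrlj (by omega)
          refine ⟨hrji, ?_⟩
          rw [hBil]
          calc (τ i : MP) + mpPow B q l j
              ≤ (Nb : MP) + (((rk G l - rk G j : ℕ) * Nb : ℝ) : MP) :=
                add_le_add (WithBot.coe_le_coe.2 (hNb i)) hle
            _ = ((Nb + (rk G l - rk G j : ℕ) * Nb : ℝ) : MP) := by
                rw [WithBot.coe_add]
            _ ≤ (((rk G i - rk G j : ℕ) * Nb : ℝ) : MP) := by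
                apply WithBot.coe_le_coe.2
                have h1 : (rk G l - rk G j) + 1 ≤ rk G i - rk G j := by omega
                calc Nb + (rk G l - rk G j : ℕ) * Nb
                    = (((rk G l - rk G j) + 1 : ℕ) : ℝ) * Nb := by push_cast; ring
                  _ ≤ ((rk G i - rk G j : ℕ) : ℝ) * Nb := by
                      apply mul_le_mul_of_nonneg_right _ hNb0
                      exact_mod_cast h1
        · -- no edge: B i l = ⊥
          have hBil : B i l = ⊥ := by
            rw [hBentry, hGli, WithBot.add_bot]
            have : i ≠ l := fun h => hl h.symm
            simp [this]
          left; rw [hBil, WithBot.bot_add]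
    by_cases hall : ∀ l, B i l + mpPow B q l j = ⊥
    · left
      show Finset.univ.sup (fun l => B i l + mpPow B q l j) = ⊥
      simp [Finset.sup_eq_bot_iff, hall]
    · push_neg at hall
      obtain ⟨l₀, hl₀⟩ := hall
      rcases hterm l₀ with h | ⟨hrji, _⟩
      · exact absurd h hl₀
      right
      refine ⟨hrji, ?_⟩
      show Finset.univ.sup (fun l => B i l + mpPow B q l j) ≤ _
      apply Finset.sup_le
      intro l _
      rcases hterm l with h | ⟨_, h⟩
      · rw [h]; exact bot_le
      · exact h

end Stmt14Aux
namespace Stmt14Aux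

variable {n : ℕ} {G : Matrix (Fin n) (Fin n) MP} {p : ℕ}

lemma A_bound (hG : ∀ i j, G i j = 0 ∨ G i j = ⊥) (hacyc : mpAcyclic G)
    (hub : ∀ q i j, mpPath G q i j → q ≤ p)
    (τ : Fin n → ℝ) (Nb M : ℝ) (hNb0 : 0 ≤ Nb) (hNb : ∀ i, τ i ≤ Nb) (hNM : Nb ≤ M)
    (i j : Fin n) :
    mpA G p τ i j = ⊥ ∨
      (rk G j ≤ rk G i ∧
        mpA G p τ i j ≤ ((Nb + (rk G i - rk G j : ℕ) * M : ℝ) : MP)) := by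
  have hA : mpA G p τ i j
      = mpPow (mpAdd (mpOne n) (mpMul (diagM τ) G.transpose)) p i j + (τ j : MP) :=
    mpMul_diag τ _ i j
  rcases pow_bound hG hacyc hub τ Nb hNb0 hNb p i j with h | ⟨hrji, hle⟩
  · left; rw [hA, h, WithBot.bot_add]
  · right
    refine ⟨hrji, ?_⟩
    rw [hA]
    calc _ ≤ (((rk G i - rk G j : ℕ) * Nb : ℝ) : MP) + (Nb : MP) :=
          add_le_add hle (WithBot.coe_le_coe.2 (hNb j))
      _ = (((rk G i - rk G j : ℕ) * Nb + Nb : ℝ) : MP) := by rw [WithBot.coe_add]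
      _ ≤ _ := by
          apply WithBot.coe_le_coe.2
          have : ((rk G i - rk G j : ℕ) : ℝ) * Nb ≤ ((rk G i - rk G j : ℕ) : ℝ) * M :=
            mul_le_mul_of_nonneg_left hNM (by positivity)
          linarith

lemma Ak_bound (hG : ∀ i j, G i j = 0 ∨ G i j = ⊥) (hacyc : mpAcyclic G)
    (hub : ∀ q i j, mpPath G q i j → q ≤ p)
    (τs : ℕ → Fin n → ℝ) (Nb : ℕ → ℝ) (M : ℝ)
    (hNb0 : ∀ m, 0 ≤ Nb m) (hNb : ∀ m i, τs m i ≤ Nb m)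
    (k : ℕ) (hNM : ∀ m < k, Nb m ≤ M) (i j : Fin n) :
    mpAk G p τs k i j = ⊥ ∨
      (rk G j ≤ rk G i ∧
        mpAk G p τs k i j
          ≤ (((∑ m ∈ Finset.range k, Nb m) + (rk G i - rk G j : ℕ) * M : ℝ) : MP)) := by
  induction k generalizing i j with
  | zero =>
    by_cases h : i = j
    · subst h
      right
      refine ⟨le_rfl, ?_⟩
      show mpOne n i i ≤ _
      simp [mpOne_apply]
    · left
      show mpOne n i j = ⊥
      simp [mpOne_apply, h]
  | succ k ih =>
    have hNM' : ∀ m < k, Nb m ≤ M := fun m hm => hNM m (by omega)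
    have hterm : ∀ l : Fin n, mpA G p (τs k) i l + mpAk G p τs k l j = ⊥ ∨
        (rk G j ≤ rk G i ∧
          mpA G p (τs k) i l + mpAk G p τs k l j
            ≤ (((∑ m ∈ Finset.range (k+1), Nb m) + (rk G i - rk G j : ℕ) * M : ℝ) : MP)) := by
      intro l
      rcases ih hNM' l j with hbot | ⟨hrlj, hle1⟩
      · left; rw [hbot, WithBot.add_bot]
      rcases A_bound hG hacyc hub (τs k) (Nb k) M (hNb0 k) (hNb k) (hNM k (by omega)) i l
        with hbot | ⟨hril, hle2⟩
      · left; rw [hbot, WithBot.bot_add]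
      right
      have hrji : rk G j ≤ rk G i := le_trans hrlj hril
      refine ⟨hrji, ?_⟩
      calc mpA G p (τs k) i l + mpAk G p τs k l j
          ≤ ((Nb k + (rk G i - rk G l : ℕ) * M : ℝ) : MP)
            + (((∑ m ∈ Finset.range k, Nb m) + (rk G l - rk G j : ℕ) * M : ℝ) : MP) :=
            add_le_add hle2 hle1
        _ = _ := by
            rw [← WithBot.coe_add]
            congr 1
            rw [Finset.sum_range_succ]
            have h1 : (rk G i - rk G l) + (rk G l - rk G j) = rk G i - rk G j := by omega
            have : ((rk G i - rk G l : ℕ) : ℝ) + ((rk G l - rk G j : ℕ) : ℝ)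
                = ((rk G i - rk G j : ℕ) : ℝ) := by exact_mod_cast congrArg (Nat.cast (R := ℝ)) h1
            rw [← this]; ring
    have hAk1 : mpAk G p τs (k+1) i j
        = Finset.univ.sup (fun l => mpA G p (τs k) i l + mpAk G p τs k l j) := rfl
    by_cases hall : ∀ l, mpA G p (τs k) i l + mpAk G p τs k l j = ⊥
    · left
      rw [hAk1]
      simp [Finset.sup_eq_bot_iff, hall]
    · push_neg at hall
      obtain ⟨l₀, hl₀⟩ := hall
      rcases hterm l₀ with h | ⟨hrji, _⟩
      · exact absurd h hl₀
      right
      refine ⟨hrji, ?_⟩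
      rw [hAk1]
      apply Finset.sup_le
      intro l _
      rcases hterm l with h | ⟨_, h⟩
      · rw [h]; exact bot_le
      · exact h

end Stmt14Aux
namespace Stmt14Aux

variable {n : ℕ} {G : Matrix (Fin n) (Fin n) MP} {p : ℕ}

lemma unbot'_le_of_le {x : MP} {c : ℝ} (h : x ≤ (c : MP)) (hc : 0 ≤ c) :
    x.unbotD 0 ≤ c := by
  induction x using WithBot.recBotCoe with
  | bot => simpa using hc
  | coe a => simpa using WithBot.coe_le_coe.1 h

lemma unbot'_nonneg {x : MP} (h : (0 : MP) ≤ x ∨ x = ⊥) : 0 ≤ x.unbotD 0 := by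
  induction x using WithBot.recBotCoe with
  | bot => simp
  | coe a =>
    rcases h with h | h
    · exact_mod_cast WithBot.coe_le_coe.1 (by exact_mod_cast h)
    · simp at h

lemma pow_diag_nonneg (τ : Fin n → ℝ) (q : ℕ) (i : Fin n) :
    (0 : MP) ≤ mpPow (mpAdd (mpOne n) (mpMul (diagM τ) G.transpose)) q i i := by
  set B := mpAdd (mpOne n) (mpMul (diagM τ) G.transpose) with hB
  induction q with
  | zero => simp [mpPow, mpOne_apply]
  | succ q ih =>
    have hBii : (0 : MP) ≤ B i i := by
      rw [hB, mpAdd_apply, mpOne_apply]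
      simp
    have : mpPow B (q+1) i i = Finset.univ.sup (fun l => B i l + mpPow B q l i) := rfl
    rw [this]
    calc (0 : MP) = 0 + 0 := by simp
      _ ≤ B i i + mpPow B q i i := add_le_add hBii ih
      _ ≤ _ := Finset.le_sup (f := fun l => B i l + mpPow B q l i) (Finset.mem_univ i)

lemma A_diag_nonneg (τ : Fin n → ℝ) (hτ : ∀ i, 0 ≤ τ i) (i : Fin n) :
    (0 : MP) ≤ mpA G p τ i i := by
  have hA : mpA G p τ i i
      = mpPow (mpAdd (mpOne n) (mpMul (diagM τ) G.transpose)) p i i + (τ i : MP) :=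
    mpMul_diag τ _ i i
  rw [hA]
  calc (0 : MP) = 0 + 0 := by simp
    _ ≤ _ := add_le_add (pow_diag_nonneg τ p i) (by exact_mod_cast hτ i)

lemma Ak_diag_nonneg (τs : ℕ → Fin n → ℝ) (hτ : ∀ m i, 0 ≤ τs m i) (k : ℕ) (i : Fin n) :
    (0 : MP) ≤ mpAk G p τs k i i := by
  induction k with
  | zero => simp [mpAk, mpOne_apply]
  | succ k ih =>
    have : mpAk G p τs (k+1) i i
        = Finset.univ.sup (fun l => mpA G p (τs k) i l + mpAk G p τs k l i) := rfl
    rw [this]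
    calc (0 : MP) = 0 + 0 := by simp
      _ ≤ mpA G p (τs k) i i + mpAk G p τs k i i :=
          add_le_add (A_diag_nonneg (τs k) (hτ k) i) ih
      _ ≤ _ := Finset.le_sup (f := fun l => mpA G p (τs k) i l + mpAk G p τs k l i)
          (Finset.mem_univ i)

lemma normAk_nonneg (hn : 0 < n) (τs : ℕ → Fin n → ℝ) (hτ : ∀ m i, 0 ≤ τs m i) (k : ℕ) :
    0 ≤ (mpNorm (mpAk G p τs k)).unbotD 0 := by
  apply unbot'_nonneg
  left
  calc (0 : MP) ≤ mpAk G p τs k ⟨0, hn⟩ ⟨0, hn⟩ := Ak_diag_nonneg τs hτ k _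
    _ ≤ Finset.univ.sup (fun j => mpAk G p τs k ⟨0, hn⟩ j) :=
        Finset.le_sup (f := fun j => mpAk G p τs k ⟨0, hn⟩ j) (Finset.mem_univ _)
    _ ≤ mpNorm (mpAk G p τs k) :=
        Finset.le_sup (f := fun i => Finset.univ.sup fun j => mpAk G p τs k i j)
          (Finset.mem_univ _)

lemma normAk_le (hG : ∀ i j, G i j = 0 ∨ G i j = ⊥) (hacyc : mpAcyclic G)
    (hub : ∀ q i j, mpPath G q i j → q ≤ p)
    (τs : ℕ → Fin n → ℝ) (Nb : ℕ → ℝ) (M : ℝ) (hM0 : 0 ≤ M)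
    (hNb0 : ∀ m, 0 ≤ Nb m) (hNb : ∀ m i, τs m i ≤ Nb m)
    (k : ℕ) (hNM : ∀ m < k, Nb m ≤ M) :
    (mpNorm (mpAk G p τs k)).unbotD 0 ≤ (∑ m ∈ Finset.range k, Nb m) + p * M := by
  have hS0 : 0 ≤ ∑ m ∈ Finset.range k, Nb m :=
    Finset.sum_nonneg fun m _ => hNb0 m
  apply unbot'_le_of_le _ (by positivity)
  apply Finset.sup_le
  intro i _
  apply Finset.sup_le
  intro j _
  rcases Ak_bound hG hacyc hub τs Nb M hNb0 hNb k hNM i j with h | ⟨_, h⟩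
  · rw [h]; exact bot_le
  · refine le_trans h (WithBot.coe_le_coe.2 ?_)
    have h1 : rk G i - rk G j ≤ p := le_trans (Nat.sub_le _ _) (rk_le hub i)
    have h2 : ((rk G i - rk G j : ℕ) : ℝ) * M ≤ (p : ℝ) * M :=
      mul_le_mul_of_nonneg_right (by exact_mod_cast h1) hM0
    linarith

end Stmt14Aux
namespace Stmt14Aux

open MeasureTheory

lemma transfer {Ω : Type*} [MeasurableSpace Ω] {μ : Measure Ω}
    {F F0 : Ω → ℝ} (hF : Measurable F) (hF0 : Measurable F0)
    (hmap : μ.map F = μ.map F0) (g : ℝ → ℝ) (hg : Measurable g)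
    (hint : Integrable (fun ω => g (F0 ω)) μ) :
    Integrable (fun ω => g (F ω)) μ ∧ ∫ ω, g (F ω) ∂μ = ∫ ω, g (F0 ω) ∂μ := by
  have h0 : Integrable g (μ.map F0) :=
    (integrable_map_measure hg.aestronglyMeasurable hF0.aemeasurable).mpr hint
  have h1 : Integrable g (μ.map F) := by rw [hmap]; exact h0
  have h2 : Integrable (fun ω => g (F ω)) μ :=
    (integrable_map_measure hg.aestronglyMeasurable hF.aemeasurable).mp h1
  refine ⟨h2, ?_⟩
  have e1 : ∫ x, g x ∂(μ.map F) = ∫ ω, g (F ω) ∂μ :=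
    integral_map hF.aemeasurable hg.aestronglyMeasurable
  have e2 : ∫ x, g x ∂(μ.map F0) = ∫ ω, g (F0 ω) ∂μ :=
    integral_map hF0.aemeasurable hg.aestronglyMeasurable
  rw [← e1, ← e2, hmap]

end Stmt14Aux
namespace Stmt14Aux

noncomputable def phi (c : ℕ) (x : ℝ) : ℝ := max (x - (c : ℝ)) 0

lemma phi_nonneg (c : ℕ) (x : ℝ) : 0 ≤ phi c x := le_max_right _ _

lemma measurable_phi (c : ℕ) : Measurable (phi c) :=
  (measurable_id.sub_const _).max measurable_const

lemma phi_norm_le (c : ℕ) {x : ℝ} (hx : 0 ≤ x) : ‖phi c x‖ ≤ |x| := by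
  rw [Real.norm_eq_abs, phi, abs_of_nonneg (le_max_right _ _), abs_of_nonneg hx]
  rcases le_total (x - (c:ℝ)) 0 with h | h
  · rw [max_eq_right h]; exact hx
  · rw [max_eq_left h]
    have : (0:ℝ) ≤ (c:ℝ) := Nat.cast_nonneg c
    linarith

lemma le_add_phi (c : ℕ) (x : ℝ) : x ≤ (c : ℝ) + phi c x := by
  rcases le_total (x - (c:ℝ)) 0 with h | h
  · rw [phi, max_eq_right h]; linarith
  · rw [phi, max_eq_left h]; linarith

lemma phi_eq_zero (c : ℕ) {x : ℝ} (h : x ≤ (c:ℝ)) : phi c x = 0 := by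
  rw [phi]; exact max_eq_right (by linarith)

end Stmt14Aux

open MeasureTheory ProbabilityTheory

open Stmt14Aux

/-- In the stochastic acyclic fork-join network model, if the
random variables `‖𝒯_k‖ = max_i τ_{ik}` are i.i.d. with finite mean and finite
variance, then `limsup_k (1/k)·E[‖A_k‖] ≤ E[‖𝒯_1‖] = E[max_i τ_{i1}]`; in
particular the mean cycle time `γ = lim_k (1/k)·E[‖A_k‖]`, whenever it exists,
satisfies `γ ≤ E[max_i τ_{i1}]`. (Cycles are indexed from `0`; since `n ≥ 1`
and the service times are nonnegative, `‖A_k‖` is a real number, recovered from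
`WithBot ℝ` via `unbot' 0`.) -/
theorem stmt14 {Ω : Type*} [MeasurableSpace Ω] (μ : Measure Ω)
    [IsProbabilityMeasure μ] {n : ℕ} (hn : 0 < n)
    (G : Matrix (Fin n) (Fin n) MP)
    (hG : ∀ i j, G i j = 0 ∨ G i j = ⊥)
    (hacyc : mpAcyclic G) (p : ℕ)
    (hub : ∀ q i j, mpPath G q i j → q ≤ p)
    (hex : ∃ i j, mpPath G p i j)
    (τ : ℕ → Fin n → Ω → ℝ)
    (hτpos : ∀ k i ω, 0 ≤ τ k i ω)
    (hmeas : ∀ k i, Measurable (τ k i))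
    (N : ℕ → Ω → ℝ)
    (hN : ∀ k ω, N k ω
      = Finset.univ.sup' (Finset.univ_nonempty_iff.2 ⟨⟨0, hn⟩⟩) fun i => τ k i ω)
    (hindep : iIndepFun (m := fun _ => (inferInstance : MeasurableSpace ℝ)) N μ)
    (hident : ∀ k, Measure.map (N k) μ = Measure.map (N 0) μ)
    (hL2 : MemLp (N 0) 2 μ) :
    Filter.limsup
        (fun k : ℕ => (1 / (k : ℝ)) *
          ∫ ω, (mpNorm (mpAk G p (fun m i => τ m i ω) k)).unbotD 0 ∂μ)
        Filter.atTop
      ≤ ∫ ω, N 0 ω ∂μ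
    ∧ ∀ γ : ℝ,
        Filter.Tendsto
          (fun k : ℕ => (1 / (k : ℝ)) *
            ∫ ω, (mpNorm (mpAk G p (fun m i => τ m i ω) k)).unbotD 0 ∂μ)
          Filter.atTop (nhds γ) →
        γ ≤ ∫ ω, N 0 ω ∂μ := by
  classical
  set u : ℕ → ℝ := fun k : ℕ => (1 / (k : ℝ)) *
      ∫ ω, (mpNorm (mpAk G p (fun m i => τ m i ω) k)).unbotD 0 ∂μ with hu
  suffices hls : Filter.limsup u Filter.atTop ≤ ∫ ω, N 0 ω ∂μ by
    refine ⟨hls, fun γ hγ => ?_⟩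
    rw [← hγ.limsup_eq]
    exact hls
  -- basic facts about N
  have he : (Finset.univ : Finset (Fin n)).Nonempty := Finset.univ_nonempty_iff.2 ⟨⟨0, hn⟩⟩
  have hNmeas : ∀ m, Measurable (N m) := by
    intro m
    have hfun : N m = fun ω => Finset.univ.sup' he fun i => τ m i ω := funext (hN m)
    rw [hfun]
    have := Finset.measurable_sup' he (fun i (_ : i ∈ Finset.univ) => hmeas m i)
    convert this using 1
    ext ω
    exact (Finset.sup'_apply he _ ω).symm
  have hτleN : ∀ m i ω, τ m i ω ≤ N m ω := by
    intro m i ω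
    rw [hN m ω]
    exact Finset.le_sup' (fun i => τ m i ω) (Finset.mem_univ i)
  have hNnonneg : ∀ m ω, 0 ≤ N m ω := fun m ω =>
    le_trans (hτpos m ⟨0, hn⟩ ω) (hτleN m ⟨0, hn⟩ ω)
  have hN0int : Integrable (N 0) μ := hL2.integrable (by norm_num)
  have hNint : ∀ m, Integrable (N m) μ := fun m =>
    (transfer (hNmeas m) (hNmeas 0) (hident m) id measurable_id hN0int).1
  have hNeq : ∀ m, ∫ ω, N m ω ∂μ = ∫ ω, N 0 ω ∂μ := fun m =>
    (transfer (hNmeas m) (hNmeas 0) (hident m) id measurable_id hN0int).2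
  -- truncation
  have hφ0int : ∀ c : ℕ, Integrable (fun ω => phi c (N 0 ω)) μ := by
    intro c
    apply Integrable.mono hN0int.abs ((measurable_phi c).comp (hNmeas 0)).aestronglyMeasurable
    filter_upwards with ω
    have h := phi_norm_le c (hNnonneg 0 ω)
    simpa [Real.norm_eq_abs, abs_abs] using h
  have hφint : ∀ (c m : ℕ), Integrable (fun ω => phi c (N m ω)) μ := fun c m =>
    (transfer (hNmeas m) (hNmeas 0) (hident m) (phi c) (measurable_phi c) (hφ0int c)).1
  have hφeq : ∀ (c m : ℕ), ∫ ω, phi c (N m ω) ∂μ = ∫ ω, phi c (N 0 ω) ∂μ := fun c m =>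
    (transfer (hNmeas m) (hNmeas 0) (hident m) (phi c) (measurable_phi c) (hφ0int c)).2
  -- nonnegativity of u
  have hfnonneg : ∀ k ω, 0 ≤ (mpNorm (mpAk G p (fun m i => τ m i ω) k)).unbotD 0 :=
    fun k ω => normAk_nonneg hn _ (fun m i => hτpos m i ω) k
  have hupos : ∀ k, 0 ≤ u k := by
    intro k
    apply mul_nonneg (by positivity)
    exact integral_nonneg (fun ω => hfnonneg k ω)
  -- the key bound
  have hkey : ∀ c : ℕ, ∀ k : ℕ, 1 ≤ k →
      u k ≤ (∫ ω, N 0 ω ∂μ) + (p : ℝ) * ∫ ω, phi c (N 0 ω) ∂μ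
        + (p : ℝ) * (c : ℝ) * (1 / (k : ℝ)) := by
    intro c k hk
    have hk0 : (k : ℝ) ≠ 0 := Nat.cast_ne_zero.2 (by omega)
    set g : Ω → ℝ := fun ω =>
      (∑ m ∈ Finset.range k, N m ω) +
        (p : ℝ) * ((c : ℝ) + ∑ m ∈ Finset.range k, phi c (N m ω)) with hg
    have hptwise : ∀ ω, (mpNorm (mpAk G p (fun m i => τ m i ω) k)).unbotD 0 ≤ g ω := by
      intro ω
      apply normAk_le hG hacyc hub (fun m i => τ m i ω) (fun m => N m ω)
        ((c : ℝ) + ∑ m ∈ Finset.range k, phi c (N m ω))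
      · have : 0 ≤ ∑ m ∈ Finset.range k, phi c (N m ω) :=
          Finset.sum_nonneg fun m _ => phi_nonneg c _
        positivity
      · exact fun m => hNnonneg m ω
      · exact fun m i => hτleN m i ω
      · intro m hm
        have h1 : N m ω ≤ (c : ℝ) + phi c (N m ω) := le_add_phi c _
        have h2 : phi c (N m ω) ≤ ∑ m ∈ Finset.range k, phi c (N m ω) :=
          Finset.single_le_sum (fun m _ => phi_nonneg c (N m ω)) (Finset.mem_range.2 hm)
        linarith
    have hint1 : Integrable (fun ω => ∑ m ∈ Finset.range k, N m ω) μ :=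
      integrable_finset_sum _ fun m _ => hNint m
    have hint2 : Integrable (fun ω => ∑ m ∈ Finset.range k, phi c (N m ω)) μ :=
      integrable_finset_sum _ fun m _ => hφint c m
    have hint2' : Integrable (fun ω => (c:ℝ) + ∑ m ∈ Finset.range k, phi c (N m ω)) μ :=
      (integrable_const ((c:ℝ))).add hint2
    have hint3 : Integrable
        (fun ω => (p:ℝ) * ((c:ℝ) + ∑ m ∈ Finset.range k, phi c (N m ω))) μ :=
      hint2'.const_mul _
    have hgint : Integrable g μ := hint1.add hint3
    have hb : ∫ ω, ((c:ℝ) + ∑ m ∈ Finset.range k, phi c (N m ω)) ∂μ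
        = (c:ℝ) + (k : ℝ) * ∫ ω, phi c (N 0 ω) ∂μ := by
      rw [integral_add (integrable_const ((c:ℝ))) hint2, integral_const,
        integral_finset_sum _ (fun m _ => hφint c m),
        Finset.sum_congr rfl fun m _ => hφeq c m, Finset.sum_const, Finset.card_range,
        nsmul_eq_mul]
      simp [measure_univ]
    have hc1 : ∫ ω, (p:ℝ) * ((c:ℝ) + ∑ m ∈ Finset.range k, phi c (N m ω)) ∂μ
        = (p:ℝ) * ((c:ℝ) + (k : ℝ) * ∫ ω, phi c (N 0 ω) ∂μ) := by
      rw [integral_const_mul, hb]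
    have he1 : ∫ ω, ∑ m ∈ Finset.range k, N m ω ∂μ = (k : ℝ) * ∫ ω, N 0 ω ∂μ := by
      rw [integral_finset_sum _ (fun m _ => hNint m),
        Finset.sum_congr rfl fun m _ => hNeq m, Finset.sum_const, Finset.card_range,
        nsmul_eq_mul]
    have hgval : ∫ ω, g ω ∂μ
        = (k : ℝ) * (∫ ω, N 0 ω ∂μ) +
          (p : ℝ) * ((c : ℝ) + (k : ℝ) * ∫ ω, phi c (N 0 ω) ∂μ) := by
      rw [hg]
      rw [integral_add hint1 hint3, hc1, he1]
    have hfint_le : (∫ ω, (mpNorm (mpAk G p (fun m i => τ m i ω) k)).unbotD 0 ∂μ)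
        ≤ ∫ ω, g ω ∂μ := by
      apply integral_mono_of_nonneg
      · filter_upwards with ω; exact hfnonneg k ω
      · exact hgint
      · filter_upwards with ω; exact hptwise ω
    calc u k ≤ (1 / (k : ℝ)) * ∫ ω, g ω ∂μ := by
          exact mul_le_mul_of_nonneg_left hfint_le (by positivity)
      _ = (∫ ω, N 0 ω ∂μ) + (p : ℝ) * ∫ ω, phi c (N 0 ω) ∂μ
          + (p : ℝ) * (c : ℝ) * (1 / (k : ℝ)) := by
          rw [hgval]
          field_simp
          ring
  -- limsup bound for each c
  have hlimsup : ∀ c : ℕ, Filter.limsup u Filter.atTop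
      ≤ (∫ ω, N 0 ω ∂μ) + (p : ℝ) * ∫ ω, phi c (N 0 ω) ∂μ := by
    intro c
    set v : ℕ → ℝ := fun k =>
      (∫ ω, N 0 ω ∂μ) + (p : ℝ) * ∫ ω, phi c (N 0 ω) ∂μ + (p : ℝ) * (c : ℝ) * (1 / (k : ℝ))
      with hv
    have hvlim : Filter.Tendsto v Filter.atTop
        (nhds ((∫ ω, N 0 ω ∂μ) + (p : ℝ) * ∫ ω, phi c (N 0 ω) ∂μ)) := by
      have h1 : Filter.Tendsto (fun k : ℕ => (p : ℝ) * (c : ℝ) * (1 / (k : ℝ)))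
          Filter.atTop (nhds ((p : ℝ) * (c : ℝ) * 0)) :=
        tendsto_one_div_atTop_nhds_zero_nat.const_mul _
      have h2 := Filter.Tendsto.add
        (tendsto_const_nhds : Filter.Tendsto
          (fun _ : ℕ => (∫ ω, N 0 ω ∂μ) + (p : ℝ) * ∫ ω, phi c (N 0 ω) ∂μ)
          Filter.atTop (nhds ((∫ ω, N 0 ω ∂μ) + (p : ℝ) * ∫ ω, phi c (N 0 ω) ∂μ))) h1
      rw [hv]
      convert h2 using 2
      ring
    have huv : ∀ᶠ k in Filter.atTop, u k ≤ v k := by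
      filter_upwards [Filter.eventually_ge_atTop 1] with k hk
      exact hkey c k hk
    have h0 : Filter.IsBoundedUnder (· ≥ ·) Filter.atTop u :=
      Filter.isBoundedUnder_of ⟨0, fun k => hupos k⟩
    have h1 : Filter.IsCoboundedUnder (· ≤ ·) Filter.atTop u := h0.isCoboundedUnder_flip
    have h2 : Filter.IsBoundedUnder (· ≤ ·) Filter.atTop v := hvlim.isBoundedUnder_le
    calc Filter.limsup u Filter.atTop ≤ Filter.limsup v Filter.atTop :=
        Filter.limsup_le_limsup huv h1 h2
      _ = _ := hvlim.limsup_eq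
  -- the truncated means tend to zero
  have htrunc : Filter.Tendsto (fun c : ℕ => ∫ ω, phi c (N 0 ω) ∂μ)
      Filter.atTop (nhds 0) := by
    have h0 : (0:ℝ) = ∫ _ω, (0:ℝ) ∂μ := by simp
    rw [h0]
    apply tendsto_integral_of_dominated_convergence (fun ω => |N 0 ω|)
    · exact fun c => ((measurable_phi c).comp (hNmeas 0)).aestronglyMeasurable
    · exact hN0int.abs
    · intro c
      filter_upwards with ω
      exact phi_norm_le c (hNnonneg 0 ω)
    · filter_upwards with ω
      have hev : ∀ᶠ c : ℕ in Filter.atTop, phi c (N 0 ω) = 0 := by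
        have := (tendsto_natCast_atTop_atTop (R := ℝ)).eventually_ge_atTop (N 0 ω)
        filter_upwards [this] with c hc
        exact phi_eq_zero c hc
      exact Filter.Tendsto.congr' (Filter.EventuallyEq.symm hev) tendsto_const_nhds
  -- conclude
  have hlim2 : Filter.Tendsto
      (fun c : ℕ => (∫ ω, N 0 ω ∂μ) + (p : ℝ) * ∫ ω, phi c (N 0 ω) ∂μ)
      Filter.atTop (nhds ((∫ ω, N 0 ω ∂μ) + (p : ℝ) * 0)) :=
    tendsto_const_nhds.add (htrunc.const_mul _)
  have := ge_of_tendsto' hlim2 hlimsup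
  simpa using this
end
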